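/- Each iteration of the fuzzy c-means algorithm does not increase the objective: if (u, C) is the current state, C' is obtained from u by the centre update C'_k = (Σ_i u_{k,i}^m X_i)/(Σ_i u_{k,i}^m), and u' is obtained from C' by the membership update, then J(u', C') ≤ J(u, C), where J(u,C) = Σ_k Σ_i u_{k,i}^m ‖X_i − C_k‖². -/

import Mathlib

open Finset

lemma tangent_rpow (m a b : ℝ) (hm : 1 ≤ m) (ha : 0 ≤ a) (hb : 0 < b) :
    b ^ m + m * b ^ (m - 1) * (a - b) ≤ a ^ m := by
  have hx : (-1:ℝ) ≤ a / b - 1 := by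
    have : (0:ℝ) ≤ a / b := div_nonneg ha hb.le
    linarith
  have key := one_add_mul_self_le_rpow_one_add hx hm
  have h1 : (1 + (a / b - 1)) = a / b := by ring
  rw [h1, Real.div_rpow ha hb.le] at key
  have hbm : (0:ℝ) < b ^ m := Real.rpow_pos_of_pos hb m
  have h2 := mul_le_mul_of_nonneg_left key hbm.le
  have hbm1 : b ^ (m-1) = b ^ m / b := by
    rw [Real.rpow_sub hb, Real.rpow_one]
  calc b ^ m + m * b ^ (m - 1) * (a - b)
      = b ^ m * (1 + m * (a / b - 1)) := by
        rw [hbm1]; field_simp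
    _ ≤ b ^ m * (a ^ m / b ^ m) := h2
    _ = a ^ m := by field_simp

lemma center_step {D n : ℕ} (X : Fin n → EuclideanSpace ℝ (Fin D))
    (w : Fin n → ℝ) (hw : ∀ i, 0 ≤ w i) (hW : 0 < ∑ i, w i)
    (c c' : EuclideanSpace ℝ (Fin D))
    (hc' : c' = (∑ i, w i)⁻¹ • ∑ i, w i • X i) :
    ∑ i, w i * ‖X i - c'‖^2 ≤ ∑ i, w i * ‖X i - c‖^2 := by
  set v := c' - c with hv
  have hzero : ∑ i, w i • (X i - c') = 0 := by
    have h1 : ∑ i, w i • (X i - c') = (∑ i, w i • X i) - (∑ i, w i) • c' := by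
      simp only [smul_sub]
      rw [Finset.sum_sub_distrib, Finset.sum_smul]
    rw [h1, hc', smul_inv_smul₀ hW.ne', sub_self]
  have hinner : ∑ i, w i * (inner ℝ (X i - c') v : ℝ) = 0 := by
    have h : (inner ℝ (∑ i, w i • (X i - c')) v : ℝ) = 0 := by
      rw [hzero]; exact inner_zero_left v
    rw [sum_inner] at h
    simp_rw [real_inner_smul_left] at h
    exact h
  have expand : ∀ i, ‖X i - c‖^2 = ‖X i - c'‖^2 + 2 * (inner ℝ (X i - c') v : ℝ) + ‖v‖^2 := by
    intro i
    have h : X i - c = (X i - c') + v := by rw [hv]; abel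
    rw [h, norm_add_sq_real]
  have hsum : ∑ i, w i * ‖X i - c‖^2
      = ∑ i, w i * ‖X i - c'‖^2 + 2 * ∑ i, w i * (inner ℝ (X i - c') v : ℝ)
        + (∑ i, w i) * ‖v‖^2 := by
    rw [Finset.mul_sum, Finset.sum_mul, ← Finset.sum_add_distrib, ← Finset.sum_add_distrib]
    refine Finset.sum_congr rfl fun i _ => ?_
    rw [expand i]; ring
  rw [hsum, hinner]
  have : (0:ℝ) ≤ (∑ i, w i) * ‖v‖^2 := by positivity
  linarith

lemma membership_step {K : ℕ} (m : ℝ) (hm : 1 < m)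
    (d : Fin K → ℝ) (hd : ∀ k, 0 < d k)
    (u u' : Fin K → ℝ) (hu : ∀ k, 0 ≤ u k) (hu1 : ∑ k, u k = 1)
    (hu'pos : ∀ k, 0 < u' k) (hu'1 : ∑ k, u' k = 1)
    (lam : ℝ) (hlam : ∀ k, u' k ^ (m-1) * d k = lam) :
    ∑ k, u' k ^ m * d k ≤ ∑ k, u k ^ m * d k := by
  have key : ∀ k, u' k ^ m * d k + m * lam * (u k - u' k) ≤ u k ^ m * d k := by
    intro k
    have h := tangent_rpow m (u k) (u' k) hm.le (hu k) (hu'pos k)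
    have h2 : (u' k ^ m + m * u' k ^ (m-1) * (u k - u' k)) * d k ≤ u k ^ m * d k :=
      mul_le_mul_of_nonneg_right h (hd k).le
    calc u' k ^ m * d k + m * lam * (u k - u' k)
        = (u' k ^ m + m * u' k ^ (m-1) * (u k - u' k)) * d k := by
          rw [← hlam k]; ring
      _ ≤ _ := h2
  have hsum := Finset.sum_le_sum (fun k (_ : k ∈ Finset.univ) => key k)
  rw [Finset.sum_add_distrib] at hsum
  have hz : ∑ k, m * lam * (u k - u' k) = 0 := by
    rw [← Finset.mul_sum, Finset.sum_sub_distrib, hu1, hu'1]; ring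
  linarith [hsum]

/-- One iteration of fuzzy c-means (centre update followed by
membership update) does not increase the objective `J(u,C) = ∑ₖ∑ᵢ u_{k,i}^m ‖X_i − C_k‖²`. -/
theorem fcm_iteration_decreases_objective
    (D n K : ℕ) (m : ℝ) (hm : 1 < m)
    (X : Fin n → EuclideanSpace ℝ (Fin D))
    (u : Fin K → Fin n → ℝ)
    (hu : ∀ k i, 0 ≤ u k i) (hu1 : ∀ i, ∑ k, u k i = 1)
    (C C' : Fin K → EuclideanSpace ℝ (Fin D))
    (hden : ∀ k, 0 < ∑ i, u k i ^ m)
    (hC' : ∀ k, C' k = (∑ i, u k i ^ m)⁻¹ • ∑ i, u k i ^ m • X i)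
    (hdist : ∀ k i, 0 < ‖X i - C' k‖)
    (u' : Fin K → Fin n → ℝ)
    (hu' : ∀ k i, u' k i =
      (‖X i - C' k‖ ^ (2/(m-1)))⁻¹ / ∑ j, (‖X i - C' j‖ ^ (2/(m-1)))⁻¹) :
    ∑ k, ∑ i, u' k i ^ m * ‖X i - C' k‖^2 ≤
      ∑ k, ∑ i, u k i ^ m * ‖X i - C k‖^2 := by
  have hm1 : (0:ℝ) < m - 1 := by linarith
  set S : Fin n → ℝ := fun i => ∑ j, (‖X i - C' j‖ ^ (2/(m-1)))⁻¹ with hS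
  have hterm : ∀ i (k : Fin K), (0:ℝ) < (‖X i - C' k‖ ^ (2/(m-1)))⁻¹ := by
    intro i k
    exact inv_pos.mpr (Real.rpow_pos_of_pos (hdist k i) _)
  have hne : ∀ _i : Fin n, (Finset.univ : Finset (Fin K)).Nonempty := by
    intro i
    rcases isEmpty_or_nonempty (Fin K) with h | h
    · exfalso; have := hu1 i; simp at this
    · exact Finset.univ_nonempty
  have hSpos : ∀ i, 0 < S i := fun i =>
    Finset.sum_pos (fun k _ => hterm i k) (hne i)
  have hu'pos : ∀ k i, 0 < u' k i := by
    intro k i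
    rw [hu' k i]
    exact div_pos (hterm i k) (hSpos i)
  have hu'1 : ∀ i, ∑ k, u' k i = 1 := by
    intro i
    simp_rw [hu']
    rw [← Finset.sum_div]
    exact div_self (hSpos i).ne'
  have hlam : ∀ i k, u' k i ^ (m-1) * ‖X i - C' k‖^2 = (S i ^ (m-1))⁻¹ := by
    intro i k
    have hr : (0:ℝ) < ‖X i - C' k‖ := hdist k i
    rw [hu' k i, Real.div_rpow (by positivity) (hSpos i).le,
        ← Real.rpow_neg hr.le, ← Real.rpow_natCast (‖X i - C' k‖) 2,
        ← Real.rpow_mul hr.le]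
    have he : -(2/(m-1)) * (m-1) = -2 := by field_simp
    rw [he]
    have hcomb : ‖X i - C' k‖ ^ (-(2:ℝ)) * ‖X i - C' k‖ ^ (((2:ℕ):ℝ)) = 1 := by
      rw [← Real.rpow_add hr]; norm_num
    calc ‖X i - C' k‖ ^ (-(2:ℝ)) / S i ^ (m-1) * ‖X i - C' k‖ ^ (((2:ℕ):ℝ))
        = (‖X i - C' k‖ ^ (-(2:ℝ)) * ‖X i - C' k‖ ^ (((2:ℕ):ℝ))) / S i ^ (m-1) := by
          ring
      _ = (S i ^ (m-1))⁻¹ := by rw [hcomb, one_div]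
  calc ∑ k, ∑ i, u' k i ^ m * ‖X i - C' k‖^2
      = ∑ i, ∑ k, u' k i ^ m * ‖X i - C' k‖^2 := Finset.sum_comm
    _ ≤ ∑ i, ∑ k, u k i ^ m * ‖X i - C' k‖^2 := by
        refine Finset.sum_le_sum fun i _ => ?_
        exact membership_step m hm (fun k => ‖X i - C' k‖^2)
          (fun k => pow_pos (hdist k i) 2) (fun k => u k i) (fun k => u' k i)
          (fun k => hu k i) (hu1 i) (fun k => hu'pos k i) (hu'1 i)
          ((S i ^ (m-1))⁻¹) (fun k => hlam i k)
    _ = ∑ k, ∑ i, u k i ^ m * ‖X i - C' k‖^2 := Finset.sum_comm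
    _ ≤ ∑ k, ∑ i, u k i ^ m * ‖X i - C k‖^2 := by
        refine Finset.sum_le_sum fun k _ => ?_
        exact center_step X (fun i => u k i ^ m)
          (fun i => Real.rpow_nonneg (hu k i) m) (hden k) (C k) (C' k) (hC' k)
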